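/- Let F : ℕ → ℕ be a sequence of positive integers that is GCD-morphic, i.e. gcd(F m, F n) = F (gcd m n) for all m, n ≥ 1. Then F is cobweb-admissible: for all k ≤ n, the product (∏_{i=1}^{k} F i) · (∏_{i=1}^{n−k} F i) divides ∏_{i=1}^{n} F i; equivalently, every F-nomial coefficient \binom{n}{k}_F = n_F!/(k_F!(n−k)_F!) is a nonnegative integer. -/

import Mathlib

open Finset

private lemma gmca_dvd_of_dvd_index (F : ℕ → ℕ)
    (hgcd : ∀ m n : ℕ, 1 ≤ m → 1 ≤ n → Nat.gcd (F m) (F n) = F (Nat.gcd m n))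
    {r i : ℕ} (hr : 1 ≤ r) (hi : 1 ≤ i) (h : r ∣ i) : F r ∣ F i := by
  have hg := hgcd r i hr hi
  rw [Nat.gcd_eq_left h] at hg
  rw [← hg]
  exact Nat.gcd_dvd_right (F r) (F i)

private lemma gmca_count_le (F : ℕ → ℕ) (hpos : ∀ i, 0 < F i)
    (hgcd : ∀ m n : ℕ, 1 ≤ m → 1 ≤ n → Nat.gcd (F m) (F n) = F (Nat.gcd m n))
    (p e k n : ℕ) (hkn : k ≤ n) :
    ((Icc 1 k).filter (fun i => p ^ e ∣ F i)).card
      + ((Icc 1 (n - k)).filter (fun i => p ^ e ∣ F i)).card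
      ≤ ((Icc 1 n).filter (fun i => p ^ e ∣ F i)).card := by
  by_cases hex : ∃ i, 1 ≤ i ∧ p ^ e ∣ F i
  · classical
    set r := Nat.find hex with hrdef
    obtain ⟨hr1, hrd⟩ := Nat.find_spec hex
    have hiff : ∀ i, 1 ≤ i → (p ^ e ∣ F i ↔ r ∣ i) := by
      intro i hi
      constructor
      · intro hdvd
        have hgpos : 1 ≤ Nat.gcd i r := Nat.le_of_lt_succ (by
          simp; omega)
        have h1 : p ^ e ∣ F (Nat.gcd i r) := by
          rw [← hgcd i r hi hr1]
          exact Nat.dvd_gcd hdvd hrd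
        have h2 : r ≤ Nat.gcd i r := Nat.find_min' hex ⟨hgpos, h1⟩
        have h3 : Nat.gcd i r ≤ r := Nat.le_of_dvd hr1 (Nat.gcd_dvd_right i r)
        have h4 : Nat.gcd i r = r := le_antisymm h3 h2
        rw [← h4]
        exact Nat.gcd_dvd_left i r
      · intro hri
        exact dvd_trans hrd (gmca_dvd_of_dvd_index F hgcd hr1 hi hri)
    have hcount : ∀ m : ℕ, ((Icc 1 m).filter (fun i => p ^ e ∣ F i)).card = m / r := by
      intro m
      have : (Icc 1 m).filter (fun i => p ^ e ∣ F i) = (Ioc 0 m).filter (fun i => r ∣ i) := by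
        ext i
        simp only [mem_filter, mem_Icc, mem_Ioc]
        constructor
        · rintro ⟨⟨h1, h2⟩, h3⟩
          exact ⟨⟨h1, h2⟩, (hiff i h1).mp h3⟩
        · rintro ⟨⟨h1, h2⟩, h3⟩
          exact ⟨⟨h1, h2⟩, (hiff i h1).mpr h3⟩
      rw [this]
      exact Nat.Ioc_filter_dvd_card_eq_div m r
    rw [hcount, hcount, hcount]
    calc k / r + (n - k) / r ≤ (k + (n - k)) / r := Nat.add_div_le_add_div _ _ _
      _ = n / r := by rw [Nat.add_sub_cancel' hkn]
  · push_neg at hex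
    have hempty : ∀ m : ℕ, (Icc 1 m).filter (fun i => p ^ e ∣ F i) = ∅ := by
      intro m
      ext i
      simp only [mem_filter, mem_Icc, Finset.notMem_empty, iff_false]
      rintro ⟨⟨h1, _⟩, h3⟩
      exact hex i h1 h3
    simp [hempty]

private lemma gmca_sum_eq (F : ℕ → ℕ) (hpos : ∀ i, 0 < F i)
    {p : ℕ} (hp : p.Prime) (m B : ℕ)
    (hB : ∀ i ∈ Icc 1 m, (F i).factorization p ≤ B) :
    ∑ i ∈ Icc 1 m, (F i).factorization p
      = ∑ e ∈ Icc 1 B, ((Icc 1 m).filter (fun i => p ^ e ∣ F i)).card := by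
  classical
  have h1 : ∀ i ∈ Icc 1 m,
      (F i).factorization p = ((Icc 1 B).filter (fun e => p ^ e ∣ F i)).card := by
    intro i hi
    have hv := hB i hi
    have heq : (Icc 1 B).filter (fun e => p ^ e ∣ F i) = Icc 1 ((F i).factorization p) := by
      ext e
      simp only [mem_filter, mem_Icc,
        Nat.Prime.pow_dvd_iff_le_factorization hp (hpos i).ne']
      omega
    rw [heq, Nat.card_Icc]
    omega
  rw [Finset.sum_congr rfl h1]
  simp only [Finset.card_filter]
  exact Finset.sum_comm

/-- A GCD-morphic sequence of positive integers is cobweb-admissible: every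
`F`-nomial coefficient `n_F! / (k_F! (n-k)_F!)` is a (nonnegative) integer,
i.e. `k_F! ⬝ (n-k)_F!` divides `n_F!`, where `m_F! = ∏_{i=1}^{m} F i`. -/
theorem gcd_morphic_cobweb_admissible (F : ℕ → ℕ) (hpos : ∀ i, 0 < F i)
    (hgcd : ∀ m n : ℕ, 1 ≤ m → 1 ≤ n → Nat.gcd (F m) (F n) = F (Nat.gcd m n))
    (k n : ℕ) (hkn : k ≤ n) :
    (∏ i ∈ Finset.Icc 1 k, F i) * (∏ i ∈ Finset.Icc 1 (n - k), F i) ∣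
      ∏ i ∈ Finset.Icc 1 n, F i := by
  classical
  have hprodpos : ∀ m : ℕ, 0 < ∏ i ∈ Icc 1 m, F i :=
    fun m => Finset.prod_pos (fun i _ => hpos i)
  refine (Nat.factorization_le_iff_dvd
    (Nat.mul_ne_zero (hprodpos k).ne' (hprodpos (n - k)).ne') (hprodpos n).ne').mp ?_
  rw [Finsupp.le_def]
  intro p
  by_cases hp : p.Prime
  · have hfac : ∀ m : ℕ, (∏ i ∈ Icc 1 m, F i).factorization p
        = ∑ i ∈ Icc 1 m, (F i).factorization p := by
      intro m
      rw [Nat.factorization_prod (fun i _ => (hpos i).ne')]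
      exact Finset.sum_apply' p
    rw [Nat.factorization_mul (hprodpos k).ne' (hprodpos (n - k)).ne']
    simp only [Finsupp.add_apply]
    rw [hfac, hfac, hfac]
    set B := ∑ i ∈ Icc 1 n, (F i).factorization p with hBdef
    have hB : ∀ m : ℕ, m ≤ n → ∀ i ∈ Icc 1 m, (F i).factorization p ≤ B := by
      intro m hm i hi
      rw [mem_Icc] at hi
      exact Finset.single_le_sum (f := fun i => (F i).factorization p)
        (fun j _ => Nat.zero_le _) (mem_Icc.mpr ⟨hi.1, le_trans hi.2 hm⟩)
    have hrhs : B = ∑ e ∈ Icc 1 B, ((Icc 1 n).filter (fun i => p ^ e ∣ F i)).card :=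
      hBdef.trans (gmca_sum_eq F hpos hp n B (hB n le_rfl))
    rw [gmca_sum_eq F hpos hp k B (hB k hkn),
      gmca_sum_eq F hpos hp (n - k) B (hB (n - k) (Nat.sub_le n k)),
      ← Finset.sum_add_distrib]
    conv_rhs => rw [hrhs]
    exact Finset.sum_le_sum (fun e _ => gmca_count_le F hpos hgcd p e k n hkn)
  · simp [Nat.factorization_eq_zero_of_not_prime _ hp]
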